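/- Under the hypotheses of the Newtonian pressure-monotonicity theorem (average density nonincreasing, p'(r) = -ρ(r)m(r)/r², p(R) ≥ 0), the central pressure satisfies p_c ≥ p(r) + (3/(8π))·m(r)²/r⁴ for all r ∈ (0,R], and in particular p_c ≥ (3/(8π))·M²/R⁴ where M = m(R). -/

import Mathlib

open Real Set MeasureTheory

lemma integral_inv_sq_Ioc {a r : ℝ} (ha : 0 < a) (har : a ≤ r) :
    ∫ t in Ioc a r, (t ^ 2)⁻¹ = a⁻¹ - r⁻¹ := by
  rw [← intervalIntegral.integral_of_le har]
  have hd : ∀ t ∈ uIcc a r, HasDerivAt (fun t : ℝ => -t⁻¹) ((t ^ 2)⁻¹) t := by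
    intro t ht
    rw [uIcc_of_le har] at ht
    have ht0 : t ≠ 0 := by nlinarith [ht.1]
    simpa using (hasDerivAt_inv ht0).fun_neg
  have hint : IntervalIntegrable (fun t : ℝ => (t ^ 2)⁻¹) volume a r := by
    apply ContinuousOn.intervalIntegrable
    intro t ht
    rw [uIcc_of_le har] at ht
    have ht0 : t ≠ 0 := by nlinarith [ht.1]
    exact ((continuousAt_id.pow 2).inv₀ (pow_ne_zero _ ht0)).continuousWithinAt
  rw [intervalIntegral.integral_eq_sub_of_hasDerivAt hd hint]
  ring

/-- Corollary of Newtonian pressure monotonicity: the central pressure dominates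
`p(r) + (3/(8π)) m(r)²/r⁴`, and in particular `p_c ≥ (3/(8π)) M²/R⁴`. -/
theorem newtonian_central_pressure_bound
    (R : ℝ) (hR : 0 < R) (m ρ p : ℝ → ℝ)
    (hρ : ∀ s ∈ Icc (0:ℝ) R, 0 ≤ ρ s)
    (hm : ∀ r ∈ Icc (0:ℝ) R, m r = ∫ s in (0:ℝ)..r, 4 * π * ρ s * s ^ 2)
    (hmdiff : DifferentiableOn ℝ m (Icc 0 R))
    (havg : AntitoneOn (fun r => 3 * m r / (4 * π * r ^ 3)) (Ioc 0 R))
    (hp : ∀ r ∈ Ioc (0:ℝ) R, HasDerivAt p (-(ρ r * m r) / r ^ 2) r)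
    (hpc : ContinuousWithinAt p (Icc 0 R) 0)
    (hpR : 0 ≤ p R) :
    (∀ r ∈ Ioc (0:ℝ) R, p 0 ≥ p r + (3 / (8 * π)) * (m r) ^ 2 / r ^ 4) ∧
      p 0 ≥ (3 / (8 * π)) * (m R) ^ 2 / R ^ 4 := by
  have hπ : (0:ℝ) < π := Real.pi_pos
  set f : ℝ → ℝ := fun s => 4 * π * ρ s * s ^ 2 with hf_def
  -- basic facts about m
  have hm0 : m 0 = 0 := by
    rw [hm 0 ⟨le_refl 0, hR.le⟩, intervalIntegral.integral_same]
  have hfnn : ∀ s ∈ Icc (0:ℝ) R, 0 ≤ f s := by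
    intro s hs
    have := hρ s hs
    positivity
  have hmnn : ∀ s ∈ Icc (0:ℝ) R, 0 ≤ m s := by
    intro s hs
    rw [hm s hs]
    exact intervalIntegral.integral_nonneg hs.1
      (fun u hu => hfnn u ⟨hu.1, hu.2.trans hs.2⟩)
  -- limits at 0
  have hplim : Filter.Tendsto p (nhdsWithin 0 (Ioi 0)) (nhds (p 0)) := by
    rw [← nhdsWithin_Ioc_eq_nhdsGT hR]
    exact hpc.mono_left (nhdsWithin_mono _ Ioc_subset_Icc_self)
  have hmlim : Filter.Tendsto m (nhdsWithin 0 (Ioi 0)) (nhds (m 0)) := by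
    rw [← nhdsWithin_Ioc_eq_nhdsGT hR]
    exact ((hmdiff.continuousOn 0 ⟨le_refl 0, hR.le⟩).mono_left
      (nhdsWithin_mono _ Ioc_subset_Icc_self))
  rw [hm0] at hmlim
  -- antitone average density, restated
  have hms : ∀ r ∈ Ioc (0:ℝ) R, ∀ s ∈ Ioc (0:ℝ) r, m r / r ^ 3 * s ^ 3 ≤ m s := by
    intro r hr s hs
    have h := havg (a := s) (b := r) ⟨hs.1, hs.2.trans hr.2⟩ hr hs.2
    have hs3 : (0:ℝ) < s ^ 3 := pow_pos hs.1 3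
    have hr3 : (0:ℝ) < r ^ 3 := pow_pos hr.1 3
    rw [div_le_div_iff₀ (by positivity) (by positivity)] at h
    rw [div_mul_eq_mul_div, div_le_iff₀ hr3]
    nlinarith
  -- p is antitone on Ioc 0 R
  have hpanti : ∀ a ∈ Ioc (0:ℝ) R, ∀ b ∈ Ioc (0:ℝ) R, a ≤ b → p b ≤ p a := by
    intro a ha b hb hab
    have hsub : Icc a R ⊆ Ioc 0 R := fun z hz => ⟨lt_of_lt_of_le ha.1 hz.1, hz.2⟩
    have hcont : ContinuousOn p (Icc a R) := fun z hz =>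
      ((hp z (hsub hz)).continuousAt).continuousWithinAt
    have hdiff : DifferentiableOn ℝ p (interior (Icc a R)) := by
      intro z hz
      rw [interior_Icc] at hz
      exact ((hp z (hsub (Ioo_subset_Icc_self hz))).differentiableAt).differentiableWithinAt
    have hanti := antitoneOn_of_deriv_nonpos (convex_Icc a R) hcont hdiff ?_
    · exact hanti ⟨le_refl a, ha.2⟩ ⟨hab, hb.2⟩ hab
    · intro z hz
      rw [interior_Icc] at hz
      have hz' := hsub (Ioo_subset_Icc_self hz)
      rw [(hp z hz').deriv]
      have h1 : 0 ≤ ρ z * m z :=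
        mul_nonneg (hρ z (Ioc_subset_Icc_self hz')) (hmnn z (Ioc_subset_Icc_self hz'))
      rw [neg_div]
      simp only [neg_nonpos]
      positivity
  -- the key claim
  have key : ∀ r ∈ Ioc (0:ℝ) R, p 0 ≥ p r + (3 / (8 * π)) * (m r) ^ 2 / r ^ 4 := by
    intro r hr
    obtain ⟨hr0, hrR⟩ := hr
    by_cases hmr : m r = 0
    · rw [hmr]
      have : p 0 ≥ p r := by
        have hev : ∀ᶠ e in nhdsWithin 0 (Ioi 0), p r ≤ p e := by
          filter_upwards [Ioc_mem_nhdsGT hr0] with e he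
          exact hpanti e ⟨he.1, he.2.trans hrR⟩ r ⟨hr0, hrR⟩ he.2
        exact ge_of_tendsto hplim hev
      simpa using this
    · -- main case
      have hmrpos : 0 < m r := lt_of_le_of_ne (hmnn r ⟨hr0.le, hrR⟩) (Ne.symm hmr)
      set c : ℝ := m r / r ^ 3 with hc_def
      have hcpos : 0 < c := div_pos hmrpos (pow_pos hr0 3)
      have hIf : IntervalIntegrable f volume 0 r := by
        by_contra h
        exact hmr ((hm r ⟨hr0.le, hrR⟩).trans (intervalIntegral.integral_undef h))
      have hsub : ∀ a b : ℝ, 0 ≤ a → a ≤ b → b ≤ r → m b - m a = ∫ s in a..b, f s := by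
        intro a b ha hab hbr
        have h1 : IntervalIntegrable f volume 0 b := hIf.mono_set
          (uIcc_subset_uIcc left_mem_uIcc
            (by rw [uIcc_of_le hr0.le]; exact ⟨ha.trans hab, hbr⟩))
        have h2 : IntervalIntegrable f volume 0 a := hIf.mono_set
          (uIcc_subset_uIcc left_mem_uIcc
            (by rw [uIcc_of_le hr0.le]; exact ⟨ha, hab.trans hbr⟩))
        rw [hm a ⟨ha, (hab.trans hbr).trans hrR⟩, hm b ⟨ha.trans hab, hbr.trans hrR⟩]
        exact intervalIntegral.integral_interval_sub_left h1 h2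
      -- main estimate, for 0 < a ≤ b ≤ r
      have main_est : ∀ b ∈ Ioc (0:ℝ) r, ∀ a ∈ Ioc (0:ℝ) b,
          p r + c / (4 * π) * ((m r - m a) * r⁻¹ + c * (r ^ 2 - b ^ 2) / 2
            - m a * (b⁻¹ - r⁻¹)) ≤ p a := by
        intro b hb a ha
        obtain ⟨hb0, hbr⟩ := hb
        obtain ⟨ha0, hab⟩ := ha
        have har : a ≤ r := hab.trans hbr
        have hIar : IntervalIntegrable f volume a r := hIf.mono_set
          (uIcc_subset_uIcc (by rw [uIcc_of_le hr0.le]; exact ⟨ha0.le, har⟩)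
            (by rw [uIcc_of_le hr0.le]; exact ⟨hr0.le, le_refl r⟩))
        have hfw : ∀ w : ℝ → ℝ, ContinuousOn w (Icc a r) →
            IntervalIntegrable (fun x => f x * w x) volume a r := by
          intro w hw
          exact hIar.mul_continuousOn (by rwa [uIcc_of_le har])
        have hmcont : ContinuousOn m (Icc a r) := (hmdiff.continuousOn).mono
          (fun z hz => ⟨ha0.le.trans hz.1, hz.2.trans hrR⟩)
        have hmcontb : ContinuousOn m (Icc b r) := hmcont.mono
          (fun z hz => ⟨hab.trans hz.1, hz.2⟩)
        -- FTC: pressure drop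
        have hderiv : ∀ x ∈ uIcc a r, HasDerivAt p (-(f x * (m x / (4 * π * x ^ 4)))) x := by
          intro x hx
          rw [uIcc_of_le har] at hx
          have hx0 : 0 < x := lt_of_lt_of_le ha0 hx.1
          have h := hp x ⟨hx0, hx.2.trans hrR⟩
          convert h using 1
          have hx0' : x ≠ 0 := ne_of_gt hx0
          field_simp
          ring
        have hwcont : ContinuousOn (fun x : ℝ => m x / (4 * π * x ^ 4)) (Icc a r) := by
          apply hmcont.div
          · fun_prop
          · intro x hx
            have hx0 : 0 < x := lt_of_lt_of_le ha0 hx.1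
            positivity
        have hftc := intervalIntegral.integral_eq_sub_of_hasDerivAt hderiv
          ((hfw _ hwcont).neg)
        rw [intervalIntegral.integral_neg] at hftc
        have hdrop : p a - p r = ∫ x in a..r, f x * (m x / (4 * π * x ^ 4)) := by
          linarith
        -- pointwise bound by c/(4π) * f x * x⁻¹
        have hinvcont : ContinuousOn (fun x : ℝ => x⁻¹) (Icc a r) := by
          intro x hx
          exact (continuousAt_inv₀ (ne_of_gt (lt_of_lt_of_le ha0 hx.1))).continuousWithinAt
        have hmono1 : (∫ x in a..r, f x * (c / (4 * π) * x⁻¹))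
            ≤ ∫ x in a..r, f x * (m x / (4 * π * x ^ 4)) := by
          apply intervalIntegral.integral_mono_on har
            (hfw _ (continuousOn_const.mul hinvcont)) (hfw _ hwcont)
          intro x hx
          have hx0 : 0 < x := lt_of_lt_of_le ha0 hx.1
          have hmx : c * x ^ 3 ≤ m x := by
            rw [hc_def]
            exact hms r ⟨hr0, hrR⟩ x ⟨hx0, hx.2⟩
          have hfx : 0 ≤ f x := hfnn x ⟨hx0.le, hx.2.trans hrR⟩
          have heq : c / (4 * π) * x⁻¹ = c * x ^ 3 / (4 * π * x ^ 4) := by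
            have : x ≠ 0 := ne_of_gt hx0
            field_simp
          show f x * (c / (4 * π) * x⁻¹) ≤ _
          rw [heq]
          apply mul_le_mul_of_nonneg_left _ hfx
          gcongr
        have hpull : (∫ x in a..r, f x * (c / (4 * π) * x⁻¹))
            = c / (4 * π) * ∫ x in a..r, f x * x⁻¹ := by
          rw [← intervalIntegral.integral_const_mul]
          congr 1
          funext x
          ring
        -- Fubini
        set F : ℝ → ℝ → ℝ := fun s t => if s < t then f s * (t ^ 2)⁻¹ else 0 with hF_def
        have hinv2cont : ∀ a' : ℝ, 0 < a' → ContinuousOn (fun t : ℝ => (t ^ 2)⁻¹) (Icc a' r) := by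
          intro a' ha' t ht
          exact ((continuousAt_id.pow 2).inv₀
            (pow_ne_zero 2 (ne_of_gt (lt_of_lt_of_le ha' ht.1)))).continuousWithinAt
        have hFint : Integrable (Function.uncurry F)
            ((volume.restrict (Ioc a r)).prod (volume.restrict (Ioc b r))) := by
          have hG : Integrable (fun z : ℝ × ℝ => f z.1 * ((z.2) ^ 2)⁻¹)
              ((volume.restrict (Ioc a r)).prod (volume.restrict (Ioc b r))) := by
            have hti : Integrable (fun t : ℝ => (t ^ 2)⁻¹) (volume.restrict (Ioc b r)) :=
              ((hinv2cont b hb0).integrableOn_Icc).mono_set Ioc_subset_Icc_self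
            exact Integrable.mul_prod (f := f) (g := fun t : ℝ => (t ^ 2)⁻¹) hIar.1 hti
          have huncurry : Function.uncurry F
              = Set.indicator {z : ℝ × ℝ | z.1 < z.2} (fun z => f z.1 * ((z.2) ^ 2)⁻¹) := by
            funext z
            rw [Set.indicator_apply]
            rfl
          rw [huncurry]
          exact hG.indicator (measurableSet_lt measurable_fst measurable_snd)
        have hswap := MeasureTheory.integral_integral_swap hFint
        have hinner : ∀ s ∈ Ioc a r,
            (∫ t in Ioc b r, F s t) = f s * ((max s b)⁻¹ - r⁻¹) := by
          intro s hs
          have h1 : (fun t => F s t) = Set.indicator (Ioi s) (fun t => f s * (t ^ 2)⁻¹) := by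
            funext t
            rw [Set.indicator_apply, hF_def]
            simp [mem_Ioi]
          rw [h1, integral_indicator measurableSet_Ioi,
            Measure.restrict_restrict measurableSet_Ioi]
          have h2 : Ioi s ∩ Ioc b r = Ioc (max s b) r := by
            ext x
            simp only [mem_inter_iff, mem_Ioi, mem_Ioc, max_lt_iff]
            tauto
          rw [h2, integral_const_mul,
            integral_inv_sq_Ioc (lt_max_iff.mpr (Or.inl (ha0.trans hs.1))) (max_le hs.2 hbr)]
        have houter : ∀ t ∈ Ioc b r,
            (∫ s in Ioc a r, F s t) = (m t - m a) * (t ^ 2)⁻¹ := by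
          intro t ht
          have h1 : (fun s => F s t) = Set.indicator (Iio t) (fun s => f s * (t ^ 2)⁻¹) := by
            funext s
            rw [Set.indicator_apply, hF_def]
            simp [mem_Iio]
          rw [h1, integral_indicator measurableSet_Iio,
            Measure.restrict_restrict measurableSet_Iio]
          have hat : a < t := lt_of_le_of_lt hab ht.1
          have h2 : Iio t ∩ Ioc a r = Ioo a t := by
            ext x
            simp only [mem_inter_iff, mem_Iio, mem_Ioc, mem_Ioo]
            constructor
            · rintro ⟨hx1, hx2, hx3⟩; exact ⟨hx2, hx1⟩
            · rintro ⟨hx1, hx2⟩; exact ⟨hx2, hx1, hx2.le.trans ht.2⟩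
          rw [h2, integral_mul_const, ← integral_Ioc_eq_integral_Ioo,
            ← intervalIntegral.integral_of_le hat.le, ← hsub a t ha0.le hat.le ht.2]
        have hIl : (∫ s in Ioc a r, ∫ t in Ioc b r, F s t)
            = ∫ s in Ioc a r, f s * ((max s b)⁻¹ - r⁻¹) :=
          setIntegral_congr_fun measurableSet_Ioc hinner
        have hIr : (∫ t in Ioc b r, ∫ s in Ioc a r, F s t)
            = ∫ t in Ioc b r, (m t - m a) * (t ^ 2)⁻¹ :=
          setIntegral_congr_fun measurableSet_Ioc houter
        have hdouble : (∫ s in Ioc a r, f s * ((max s b)⁻¹ - r⁻¹))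
            = ∫ t in Ioc b r, (m t - m a) * (t ^ 2)⁻¹ := by
          rw [← hIl, hswap, hIr]
        -- integrabilities on Ioc a r
        have hmaxcont : ContinuousOn (fun x : ℝ => (max x b)⁻¹) (Icc a r) :=
          ((continuous_id.max continuous_const).continuousOn).inv₀
            (fun x _ => ne_of_gt (lt_of_lt_of_le hb0 (le_max_right x b)))
        have hIw1 : IntegrableOn (fun x => f x * x⁻¹) (Ioc a r) := (hfw _ hinvcont).1
        have hIw2 : IntegrableOn (fun x => f x * (max x b)⁻¹) (Ioc a r) := (hfw _ hmaxcont).1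
        have hIw3 : IntegrableOn (fun x => f x * ((max x b)⁻¹ - r⁻¹)) (Ioc a r) :=
          (hfw _ (hmaxcont.sub continuousOn_const)).1
        have hIw4 : IntegrableOn (fun x => f x * r⁻¹) (Ioc a r) :=
          (hfw _ continuousOn_const).1
        have hF1 : (m r - m a) * r⁻¹ + (∫ t in Ioc b r, (m t - m a) * (t ^ 2)⁻¹)
            ≤ ∫ x in a..r, f x * x⁻¹ := by
          rw [intervalIntegral.integral_of_le har]
          have hstep1 : (∫ x in Ioc a r, f x * (max x b)⁻¹) ≤ ∫ x in Ioc a r, f x * x⁻¹ := by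
            apply setIntegral_mono_on hIw2 hIw1 measurableSet_Ioc
            intro x hx
            have hx0 : 0 < x := ha0.trans hx.1
            have hfx : 0 ≤ f x := hfnn x ⟨hx0.le, hx.2.trans hrR⟩
            apply mul_le_mul_of_nonneg_left _ hfx
            exact inv_anti₀ hx0 (le_max_left x b)
          have hsplit : (∫ x in Ioc a r, f x * (max x b)⁻¹)
              = (∫ x in Ioc a r, f x * r⁻¹) + ∫ x in Ioc a r, f x * ((max x b)⁻¹ - r⁻¹) := by
            rw [← integral_add hIw4 hIw3]
            apply setIntegral_congr_fun measurableSet_Ioc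
            intro x _
            ring
          have hterm1 : (∫ x in Ioc a r, f x * r⁻¹) = (m r - m a) * r⁻¹ := by
            rw [integral_mul_const, ← intervalIntegral.integral_of_le har,
              ← hsub a r ha0.le har (le_refl r)]
          calc (m r - m a) * r⁻¹ + (∫ t in Ioc b r, (m t - m a) * (t ^ 2)⁻¹)
              = (∫ x in Ioc a r, f x * r⁻¹)
                + ∫ x in Ioc a r, f x * ((max x b)⁻¹ - r⁻¹) := by rw [hterm1, hdouble]
            _ = ∫ x in Ioc a r, f x * (max x b)⁻¹ := hsplit.symm
            _ ≤ ∫ x in Ioc a r, f x * x⁻¹ := hstep1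
        -- lower bound for the t-integral
        have hIt1 : IntegrableOn (fun t => (m t - m a) * (t ^ 2)⁻¹) (Ioc b r) :=
          (((hmcontb.sub continuousOn_const).mul (hinv2cont b hb0)).integrableOn_Icc).mono_set
            Ioc_subset_Icc_self
        have hIt2 : IntegrableOn (fun t : ℝ => c * t - m a * (t ^ 2)⁻¹) (Ioc b r) :=
          (((continuousOn_const.mul continuousOn_id).sub
            (continuousOn_const.mul (hinv2cont b hb0))).integrableOn_Icc).mono_set
            Ioc_subset_Icc_self
        have hD2 : c * (r ^ 2 - b ^ 2) / 2 - m a * (b⁻¹ - r⁻¹)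
            ≤ ∫ t in Ioc b r, (m t - m a) * (t ^ 2)⁻¹ := by
          have hmono : (∫ t in Ioc b r, (c * t - m a * (t ^ 2)⁻¹))
              ≤ ∫ t in Ioc b r, (m t - m a) * (t ^ 2)⁻¹ := by
            apply setIntegral_mono_on hIt2 hIt1 measurableSet_Ioc
            intro t ht
            have ht0 : 0 < t := hb0.trans ht.1
            have hmt : c * t ^ 3 ≤ m t := by
              rw [hc_def]
              exact hms r ⟨hr0, hrR⟩ t ⟨ht0, ht.2⟩
            have h2 : c * t - m a * (t ^ 2)⁻¹ = (c * t ^ 3 - m a) * (t ^ 2)⁻¹ := by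
              have ht0' : t ≠ 0 := ne_of_gt ht0
              field_simp
            rw [h2]
            apply mul_le_mul_of_nonneg_right _ (by positivity)
            linarith
          have hIA : IntegrableOn (fun t : ℝ => c * t) (Ioc b r) :=
            (continuous_const.mul continuous_id).integrableOn_Ioc
          have hIB : IntegrableOn (fun t : ℝ => m a * (t ^ 2)⁻¹) (Ioc b r) :=
            (((hinv2cont b hb0).integrableOn_Icc).mono_set Ioc_subset_Icc_self).const_mul (m a)
          have hval : (∫ t in Ioc b r, (c * t - m a * (t ^ 2)⁻¹))
              = c * (r ^ 2 - b ^ 2) / 2 - m a * (b⁻¹ - r⁻¹) := by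
            rw [integral_sub hIA hIB]
            have h1 : (∫ t in Ioc b r, m a * (t ^ 2)⁻¹) = m a * (b⁻¹ - r⁻¹) := by
              rw [integral_const_mul, integral_inv_sq_Ioc hb0 hbr]
            have h2 : (∫ t in Ioc b r, c * t) = c * ((r ^ 2 - b ^ 2) / 2) := by
              rw [← intervalIntegral.integral_of_le hbr,
                intervalIntegral.integral_const_mul, integral_id]
            rw [h1, h2]
            ring
          linarith
        -- combine
        have hcnn : (0:ℝ) ≤ c / (4 * π) := le_of_lt (div_pos hcpos (by positivity))
        have hcomb : c / (4 * π) * ((m r - m a) * r⁻¹ + (c * (r ^ 2 - b ^ 2) / 2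
              - m a * (b⁻¹ - r⁻¹)))
            ≤ c / (4 * π) * ∫ x in a..r, f x * x⁻¹ :=
          mul_le_mul_of_nonneg_left (by linarith) hcnn
        linarith

      have step2 : ∀ b ∈ Ioc (0:ℝ) r,
          p r + c / (4 * π) * (m r * r⁻¹ + c * (r ^ 2 - b ^ 2) / 2) ≤ p 0 := by
        intro b hb
        have hev : ∀ᶠ x in nhdsWithin 0 (Ioi 0),
            p r + c / (4 * π) * ((m r - m x) * r⁻¹ + c * (r ^ 2 - b ^ 2) / 2
              - m x * (b⁻¹ - r⁻¹)) ≤ p x := by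
          filter_upwards [Ioc_mem_nhdsGT hb.1] with x hx
          exact main_est b hb x hx
        have hcont : Continuous (fun y : ℝ => p r + c / (4 * π) * ((m r - y) * r⁻¹
            + c * (r ^ 2 - b ^ 2) / 2 - y * (b⁻¹ - r⁻¹))) := by fun_prop
        have htd : Filter.Tendsto (fun x => p r + c / (4 * π) * ((m r - m x) * r⁻¹
            + c * (r ^ 2 - b ^ 2) / 2 - m x * (b⁻¹ - r⁻¹))) (nhdsWithin 0 (Ioi 0))
            (nhds (p r + c / (4 * π) * ((m r - 0) * r⁻¹
            + c * (r ^ 2 - b ^ 2) / 2 - 0 * (b⁻¹ - r⁻¹)))) :=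
          (hcont.tendsto 0).comp hmlim
        have hle := le_of_tendsto_of_tendsto htd hplim hev
        calc p r + c / (4 * π) * (m r * r⁻¹ + c * (r ^ 2 - b ^ 2) / 2)
            = p r + c / (4 * π) * ((m r - 0) * r⁻¹ + c * (r ^ 2 - b ^ 2) / 2
              - 0 * (b⁻¹ - r⁻¹)) := by ring
          _ ≤ p 0 := hle
      have hfin : p r + c / (4 * π) * (m r * r⁻¹ + c * r ^ 2 / 2) ≤ p 0 := by
        have hev : ∀ᶠ b in nhdsWithin 0 (Ioi 0),
            p r + c / (4 * π) * (m r * r⁻¹ + c * (r ^ 2 - b ^ 2) / 2) ≤ p 0 := by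
          filter_upwards [Ioc_mem_nhdsGT hr0] with b hb
          exact step2 b hb
        have hcont : Continuous (fun b : ℝ =>
            p r + c / (4 * π) * (m r * r⁻¹ + c * (r ^ 2 - b ^ 2) / 2)) := by fun_prop
        have htd := (hcont.tendsto 0).mono_left (nhdsWithin_le_nhds (s := Ioi (0:ℝ)))
        have hle := le_of_tendsto_of_tendsto htd tendsto_const_nhds hev
        calc p r + c / (4 * π) * (m r * r⁻¹ + c * r ^ 2 / 2)
            = p r + c / (4 * π) * (m r * r⁻¹ + c * (r ^ 2 - 0 ^ 2) / 2) := by ring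
          _ ≤ p 0 := hle
      have halg : p r + c / (4 * π) * (m r * r⁻¹ + c * r ^ 2 / 2)
          = p r + 3 / (8 * π) * m r ^ 2 / r ^ 4 := by
        rw [hc_def]
        field_simp
        ring
      rw [ge_iff_le, ← halg]
      exact hfin
  refine ⟨key, ?_⟩
  have h := key R ⟨hR, le_refl R⟩
  linarith
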